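/- arXiv:1809.08437 — 7 statements merged into one kernel-verified Lean document; each statement's English description precedes it below -/
import Mathlib

section
/- Let G be a tournament and x a vertex of G that is not contained in any directed triangle. Let H_in = G[N⁻(x)] and H_out = G[N⁺(x)]. Then a set S ⊆ V(G) is a feedback vertex set of G if and only if S ∩ V(H_in) is an FVS of H_in and S ∩ V(H_out) is an FVS of H_out. -/
open Finset

variable {V : Type*}

/-- A digraph (given by its arc relation) is acyclic if no vertex lies on a directed cycle. -/
def Acyclic (E : V → V → Prop) : Prop := ∀ v, ¬ Relation.TransGen E v v

/-- The digraph obtained by deleting the vertex set `X`. -/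
def Delete [DecidableEq V] (E : V → V → Prop) (X : Finset V) : V → V → Prop :=
  fun a b => a ∉ X ∧ b ∉ X ∧ E a b

/-- The subgraph induced on the vertex set `A`. -/
def Induce [DecidableEq V] (E : V → V → Prop) (A : Finset V) : V → V → Prop :=
  fun a b => a ∈ A ∧ b ∈ A ∧ E a b

/-- `S` is a feedback vertex set of the digraph `E`. -/
def IsFVS [DecidableEq V] (E : V → V → Prop) (S : Finset V) : Prop :=
  Acyclic (Delete E S)

/-- A tournament: no self-loops and exactly one arc between any two distinct vertices. -/
def IsTournament (E : V → V → Prop) : Prop :=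
  (∀ v, ¬ E v v) ∧ ∀ u v, u ≠ v → (E u v ↔ ¬ E v u)

/-- Weight of a vertex set. -/
def weight (w : V → ℕ) (S : Finset V) : ℕ := ∑ v ∈ S, w v

/-- Out-neighborhood. -/
def Nout [Fintype V] [DecidableEq V] (E : V → V → Prop) [DecidableRel E] (p : V) : Finset V :=
  Finset.univ.filter (fun u => E p u)

/-- In-neighborhood. -/
def Nin [Fintype V] [DecidableEq V] (E : V → V → Prop) [DecidableRel E] (p : V) : Finset V :=
  Finset.univ.filter (fun u => E u p)

/-- `S` is a minimum-weight FVS of `(E, w)`. -/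
def IsOptFVS [DecidableEq V] (E : V → V → Prop) (w : V → ℕ) (S : Finset V) : Prop :=
  IsFVS E S ∧ ∀ S', IsFVS E S' → weight w S ≤ weight w S'

/-- `S` is a `p`-disjoint FVS of `E`. -/
def IsPDisjFVS [DecidableEq V] (E : V → V → Prop) (p : V) (S : Finset V) : Prop :=
  IsFVS E S ∧ p ∉ S

/-- `S` is a minimum-weight `p`-disjoint FVS of `(E, w)`. -/
def IsOptPDisjFVS [DecidableEq V] (E : V → V → Prop) (w : V → ℕ) (p : V) (S : Finset V) : Prop :=
  IsPDisjFVS E p S ∧ ∀ S', IsPDisjFVS E p S' → weight w S ≤ weight w S'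

/-- `S` is a 2-approximate solution of `(E, w)`. -/
def TwoApproxFVS [DecidableEq V] (E : V → V → Prop) (w : V → ℕ) (S : Finset V) : Prop :=
  IsFVS E S ∧ ∀ S', IsOptFVS E w S' → weight w S ≤ 2 * weight w S'

/-- `S` is a 2-approximate `p`-disjoint solution of `(E, w)`. -/
def TwoApproxPDisj [DecidableEq V] (E : V → V → Prop) (w : V → ℕ) (p : V) (S : Finset V) : Prop :=
  IsPDisjFVS E p S ∧ ∀ S', IsOptPDisjFVS E w p S' → weight w S ≤ 2 * weight w S'

/-- `l` is a topological sort of the subgraph of `E` induced on the vertex set `A`. -/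
def IsTopoOn [DecidableEq V] (E : V → V → Prop) (A : Finset V) (l : List V) : Prop :=
  l.Nodup ∧ (∀ v, v ∈ l ↔ v ∈ A) ∧
    ∀ (i j : ℕ) (hi : i < l.length) (hj : j < l.length),
      E (l.get ⟨i, hi⟩) (l.get ⟨j, hj⟩) → i < j


/-- Rank of a vertex relative to `x`: in-neighbors, then `x`, then out-neighbors. -/
def rk [Fintype V] [DecidableEq V] (E : V → V → Prop) [DecidableRel E] (x v : V) : ℕ :=
  if v ∈ Nin E x then 0 else if v = x then 1 else 2

lemma rk_le_two [Fintype V] [DecidableEq V] (E : V → V → Prop) [DecidableRel E] (x v : V) :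
    rk E x v ≤ 2 := by
  unfold rk; split
  · omega
  · split <;> omega

/-- If `x` is in no directed triangle of the tournament `G`, then `S` is an FVS of
`G` iff `S ∩ N⁻(x)` is an FVS of `G[N⁻(x)]` and `S ∩ N⁺(x)` is an FVS of `G[N⁺(x)]`. -/
theorem stmt3 [Fintype V] [DecidableEq V] (E : V → V → Prop) [DecidableRel E]
    (hT : IsTournament E) (x : V)
    (hx : ¬ ∃ a b, E x a ∧ E a b ∧ E b x) (S : Finset V) :
    IsFVS E S ↔
      IsFVS (Induce E (Nin E x)) (S ∩ Nin E x) ∧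
        IsFVS (Induce E (Nout E x)) (S ∩ Nout E x)  := by
  classical
  constructor
  · intro hS
    constructor
    · intro v hv
      refine hS v (Relation.TransGen.mono ?_ v v hv)
      rintro a b ⟨haS, hbS, ha, hb, hab⟩
      exact ⟨fun h => haS (Finset.mem_inter.mpr ⟨h, ha⟩),
             fun h => hbS (Finset.mem_inter.mpr ⟨h, hb⟩), hab⟩
    · intro v hv
      refine hS v (Relation.TransGen.mono ?_ v v hv)
      rintro a b ⟨haS, hbS, ha, hb, hab⟩
      exact ⟨fun h => haS (Finset.mem_inter.mpr ⟨h, ha⟩),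
             fun h => hbS (Finset.mem_inter.mpr ⟨h, hb⟩), hab⟩
  · rintro ⟨hIn, hOut⟩ v hv
    have step : ∀ a b, Delete E S a b →
        (rk E x a = 0 ∧ rk E x b = 0 ∧ Delete (Induce E (Nin E x)) (S ∩ Nin E x) a b) ∨
        (rk E x a = 2 ∧ rk E x b = 2 ∧ Delete (Induce E (Nout E x)) (S ∩ Nout E x) a b) ∨
        rk E x a < rk E x b := by
      rintro a b ⟨haS, hbS, hab⟩
      have hne : a ≠ b := fun h => hT.1 b (h ▸ hab)
      by_cases ha : a ∈ Nin E x
      · by_cases hb : b ∈ Nin E x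
        · exact Or.inl ⟨by simp [rk, ha], by simp [rk, hb],
            fun h => haS (Finset.mem_inter.mp h).1,
            fun h => hbS (Finset.mem_inter.mp h).1, ha, hb, hab⟩
        · right; right
          simp only [rk, if_pos ha, if_neg hb]
          split <;> omega
      · by_cases hax : a = x
        · subst hax
          have hb : b ∉ Nin E a := by
            intro h
            exact (hT.2 a b hne).mp hab (Finset.mem_filter.mp h).2
          right; right
          simp [rk, ha, hb, hne.symm]
        · have hxa : E x a := (hT.2 x a (Ne.symm hax)).mpr
            (fun h => ha (Finset.mem_filter.mpr ⟨Finset.mem_univ _, h⟩))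
          have haO : a ∈ Nout E x := Finset.mem_filter.mpr ⟨Finset.mem_univ _, hxa⟩
          by_cases hb : b ∈ Nin E x
          · exact absurd ⟨a, b, hxa, hab, (Finset.mem_filter.mp hb).2⟩ hx
          · by_cases hbx : b = x
            · exact absurd (Finset.mem_filter.mpr ⟨Finset.mem_univ _, hbx ▸ hab⟩) ha
            · have hxb : E x b := by
                have hnb : ¬ E b x := fun h => hb (Finset.mem_filter.mpr ⟨Finset.mem_univ _, h⟩)
                exact (hT.2 x b (Ne.symm hbx)).mpr hnb
              have hbO : b ∈ Nout E x := Finset.mem_filter.mpr ⟨Finset.mem_univ _, hxb⟩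
              have haN : a ∉ Nin E x := ha
              have hbN : b ∉ Nin E x := hb
              exact Or.inr (Or.inl ⟨by simp [rk, haN, hax], by simp [rk, hbN, hbx],
                fun h => haS (Finset.mem_inter.mp h).1,
                fun h => hbS (Finset.mem_inter.mp h).1, haO, hbO, hab⟩)
    have main : ∀ u w, Relation.TransGen (Delete E S) u w →
        (rk E x u = 0 ∧ rk E x w = 0 ∧
          Relation.TransGen (Delete (Induce E (Nin E x)) (S ∩ Nin E x)) u w) ∨
        (rk E x u = 2 ∧ rk E x w = 2 ∧
          Relation.TransGen (Delete (Induce E (Nout E x)) (S ∩ Nout E x)) u w) ∨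
        rk E x u < rk E x w := by
      intro u w h
      induction h with
      | single h =>
        rcases step _ _ h with ⟨h1, h2, h3⟩ | ⟨h1, h2, h3⟩ | h1
        · exact Or.inl ⟨h1, h2, Relation.TransGen.single h3⟩
        · exact Or.inr (Or.inl ⟨h1, h2, Relation.TransGen.single h3⟩)
        · exact Or.inr (Or.inr h1)
      | tail h' hstep ih =>
        rename_i b c
        have hc2 := rk_le_two E x c
        rcases step _ _ hstep with ⟨s1, s2, s3⟩ | ⟨s1, s2, s3⟩ | s1 <;>
          rcases ih with ⟨i1, i2, i3⟩ | ⟨i1, i2, i3⟩ | i1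
        · exact Or.inl ⟨i1, s2, i3.tail s3⟩
        · omega
        · right; right; omega
        · omega
        · exact Or.inr (Or.inl ⟨i1, s2, i3.tail s3⟩)
        · omega
        · right; right; omega
        · omega
        · right; right; omega
    rcases main v v hv with ⟨_, _, h⟩ | ⟨_, _, h⟩ | h
    · exact hIn v h
    · exact hOut v h
    · omega
end

section
/- Let (G, w) be a weighted tournament on n vertices that has an optimal (minimum-weight) FVS S* with |S*| ≥ 2n/3. Let D be a set of n/6 vertices of smallest weight in V(G), let Δ = max_{v ∈ D} w(v), and define w'(v) = w(v) − Δ for v ∈ V(G) \ D. If R is an FVS of G − D with w'(R) ≤ 2·w'(R*) for some minimum-w'-weight FVS R* of G − D, then R ∪ D is an FVS of G with w(R ∪ D) ≤ 2·w(S*). -/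
open Finset

variable {V : Type*}

/-- If `(G, w)` has an optimal FVS `S⋆` with `|S⋆| ≥ 2n/3`, `D` is a set of `n/6`
vertices of smallest weight, `Δ = max_{v ∈ D} w(v)` and `w'(v) = w(v) - Δ` off `D`, then for any
2-approximate solution `R` of `(G - D, w')`, the set `R ∪ D` is a 2-approximate solution of
`(G, w)`. -/
theorem stmt6 [Fintype V] [DecidableEq V] (E : V → V → Prop) [DecidableRel E]
    (hT : IsTournament E) (w : V → ℕ) (Sstar : Finset V)
    (hopt : IsOptFVS E w Sstar)
    (hbig : 2 * Fintype.card V ≤ 3 * Sstar.card)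
    (D : Finset V) (hDcard : D.card = Fintype.card V / 6)
    (hDmin : ∀ v ∈ D, ∀ u ∉ D, w v ≤ w u)
    (Δ : ℕ) (hub : ∀ v ∈ D, w v ≤ Δ) (hmem : ∃ v ∈ D, w v = Δ)
    (w' : V → ℕ) (hw' : ∀ v ∉ D, w' v = w v - Δ)
    (R Rstar : Finset V) (hRsub : ∀ v ∈ R, v ∉ D)
    (hRstar : IsOptFVS (Delete E D) w' Rstar)
    (hR : IsFVS (Delete E D) R)
    (h2 : weight w' R ≤ 2 * weight w' Rstar) :
    IsFVS E (R ∪ D) ∧ weight w (R ∪ D) ≤ 2 * weight w Sstar := by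
  obtain ⟨v₀, hv₀D, hv₀w⟩ := hmem
  have hΔle : ∀ v, v ∉ D → Δ ≤ w v := fun v hv => hv₀w ▸ hDmin v₀ hv₀D v hv
  have hdisj : Disjoint R D := Finset.disjoint_left.mpr hRsub
  -- S* \ D is an FVS of G - D
  have hSstarD : IsFVS (Delete E D) (Sstar \ D) := by
    intro v hv
    refine hopt.1 v (Relation.TransGen.mono ?_ _ _ hv)
    rintro a b ⟨ha, hb, haD, hbD, hab⟩
    refine ⟨fun h => ha (Finset.mem_sdiff.2 ⟨h, haD⟩),
      fun h => hb (Finset.mem_sdiff.2 ⟨h, hbD⟩), hab⟩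
  constructor
  · intro v hv
    refine hR v (Relation.TransGen.mono ?_ _ _ hv)
    rintro a b ⟨ha, hb, hab⟩
    simp only [Finset.mem_union, not_or] at ha hb
    exact ⟨ha.1, hb.1, ha.2, hb.2, hab⟩
  · -- arithmetic part
    have hsum : ∀ (S : Finset V), (∀ v ∈ S, v ∉ D) →
        weight w S = weight w' S + Δ * S.card := by
      intro S hS
      have : ∀ v ∈ S, w v = w' v + Δ := by
        intro v hv
        have h1 := hΔle v (hS v hv)
        rw [hw' v (hS v hv)]
        omega
      unfold weight
      rw [Finset.sum_congr rfl this, Finset.sum_add_distrib, Finset.sum_const,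
        smul_eq_mul, mul_comm]
    have hwR : weight w R = weight w' R + Δ * R.card := hsum R hRsub
    have hwS : weight w (Sstar \ D) = weight w' (Sstar \ D) + Δ * (Sstar \ D).card :=
      hsum _ (fun v hv => (Finset.mem_sdiff.1 hv).2)
    have hwD : weight w D ≤ Δ * D.card := by
      calc weight w D ≤ ∑ _v ∈ D, Δ := Finset.sum_le_sum hub
        _ = Δ * D.card := by rw [Finset.sum_const, smul_eq_mul, mul_comm]
    have hcardRD : R.card + D.card ≤ Fintype.card V := by
      have := Finset.card_le_univ (R ∪ D)
      rw [Finset.card_union_of_disjoint hdisj] at this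
      simpa using this
    have hcardS : Fintype.card V ≤ 2 * (Sstar \ D).card := by
      have h1 : Sstar.card ≤ (Sstar \ D).card + D.card := by
        have hsub : Sstar ⊆ (Sstar \ D) ∪ D := by
          intro x hx
          by_cases hxD : x ∈ D
          · exact Finset.mem_union_right _ hxD
          · exact Finset.mem_union_left _ (Finset.mem_sdiff.2 ⟨hx, hxD⟩)
        calc Sstar.card ≤ ((Sstar \ D) ∪ D).card := Finset.card_le_card hsub
          _ ≤ (Sstar \ D).card + D.card := Finset.card_union_le _ _
      omega
    have hRstarle : weight w' R ≤ 2 * weight w' (Sstar \ D) :=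
      le_trans h2 (Nat.mul_le_mul_left 2 (hRstar.2 _ hSstarD))
    have hSsub : weight w (Sstar \ D) ≤ weight w Sstar :=
      Finset.sum_le_sum_of_subset (Finset.sdiff_subset)
    calc weight w (R ∪ D) = weight w R + weight w D := by
          unfold weight; rw [Finset.sum_union hdisj]
      _ ≤ (weight w' R + Δ * R.card) + Δ * D.card := by rw [hwR]; exact Nat.add_le_add_left hwD _
      _ = weight w' R + Δ * (R.card + D.card) := by ring
      _ ≤ 2 * weight w' (Sstar \ D) + Δ * Fintype.card V :=
          Nat.add_le_add hRstarle (Nat.mul_le_mul_left Δ hcardRD)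
      _ ≤ 2 * weight w' (Sstar \ D) + Δ * (2 * (Sstar \ D).card) :=
          Nat.add_le_add_left (Nat.mul_le_mul_left Δ hcardS) _
      _ = 2 * (weight w' (Sstar \ D) + Δ * (Sstar \ D).card) := by ring
      _ = 2 * weight w (Sstar \ D) := by rw [hwS]
      _ ≤ 2 * weight w Sstar := Nat.mul_le_mul_left 2 hSsub
end

section
/- Let (G, w) be a weighted tournament, p ∈ V(G), and u, v vertices such that {p, u, v} form a directed triangle and w(v) ≤ w(u). Define w' by w'(v) = 0, w'(u) = w(u) − w(v), and w'(x) = w(x) otherwise. Then for every 2-approximate p-disjoint solution R of (G − v, w'), the set R ∪ {v} is a 2-approximate p-disjoint solution of (G, w). -/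
open Finset

variable {V : Type*}

lemma acyclic_mono' {E E' : V → V → Prop}
    (h : ∀ a b, E' a b → E a b) (hE : Acyclic E) : Acyclic E' := by
  intro x hx
  exact hE x (Relation.TransGen.mono h x x hx)

lemma acyclic_of_empty {E : V → V → Prop} (h : ∀ a b, ¬ E a b) : Acyclic E := by
  intro x hx
  cases hx with
  | single h' => exact h _ _ h'
  | tail _ h' => exact h _ _ h'

lemma exists_opt_pdisj [Fintype V] [DecidableEq V] (E : V → V → Prop) (w : V → ℕ) (p : V)
    (hself : ∀ x, ¬ E x x) : ∃ S, IsOptPDisjFVS E w p S := by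
  classical
  have h0 : IsPDisjFVS E p (univ \ {p}) := by
    constructor
    · apply acyclic_of_empty
      rintro a b ⟨ha, hb, hab⟩
      simp only [mem_sdiff, mem_univ, true_and, mem_singleton, not_not] at ha hb
      subst ha; subst hb; exact hself _ hab
    · simp
  obtain ⟨S, hSmem, hSmin⟩ := Finset.exists_min_image
    (univ.powerset.filter (fun S => IsPDisjFVS E p S)) (weight w)
    ⟨univ \ {p}, by simp [h0]⟩
  refine ⟨S, (Finset.mem_filter.1 hSmem).2, fun S' hS' => hSmin S' ?_⟩
  simp [Finset.mem_filter, hS']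

lemma triangle_hit [DecidableEq V] {E : V → V → Prop} {p u v : V}
    (htri : (E p u ∧ E u v ∧ E v p) ∨ (E p v ∧ E v u ∧ E u p))
    {S : Finset V} (hS : IsFVS E S) (hp : p ∉ S) (hv : v ∉ S) : u ∈ S := by
  by_contra hu
  rcases htri with ⟨h1, h2, h3⟩ | ⟨h1, h2, h3⟩
  · exact hS p (Relation.TransGen.head ⟨hp, hu, h1⟩
      (Relation.TransGen.head ⟨hu, hv, h2⟩ (Relation.TransGen.single ⟨hv, hp, h3⟩)))
  · exact hS p (Relation.TransGen.head ⟨hp, hv, h1⟩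
      (Relation.TransGen.head ⟨hv, hu, h2⟩ (Relation.TransGen.single ⟨hu, hp, h3⟩)))

/-- If `{p, u, v}` form a directed triangle with `w(v) ≤ w(u)`, and `w'` sets
`w'(v) = 0`, `w'(u) = w(u) - w(v)` and agrees with `w` elsewhere, then for every 2-approximate
`p`-disjoint solution `R` of `(G - v, w')`, the set `R ∪ {v}` is a 2-approximate `p`-disjoint
solution of `(G, w)`. -/
theorem stmt7 [Fintype V] [DecidableEq V] (E : V → V → Prop) [DecidableRel E]
    (hT : IsTournament E) (w : V → ℕ) (p u v : V)
    (hpu : p ≠ u) (huv : u ≠ v) (hpv : p ≠ v)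
    (htri : (E p u ∧ E u v ∧ E v p) ∨ (E p v ∧ E v u ∧ E u p))
    (hw : w v ≤ w u)
    (w' : V → ℕ) (hw'v : w' v = 0) (hw'u : w' u = w u - w v)
    (hw'x : ∀ x, x ≠ u → x ≠ v → w' x = w x)
    (R : Finset V) (hvR : v ∉ R)
    (hR : TwoApproxPDisj (Delete E {v}) w' p R) :
    TwoApproxPDisj E w p (R ∪ {v}) := by
  classical
  have hle : ∀ x, w' x ≤ w x := by
    intro x
    by_cases h1 : x = u
    · subst h1; rw [hw'u]; omega
    by_cases h2 : x = v
    · subst h2; rw [hw'v]; omega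
    · rw [hw'x x h1 h2]
  -- Part 1: R ∪ {v} is a p-disjoint FVS
  have hkeyrel : ∀ a b, Delete E (R ∪ {v}) a b → Delete (Delete E {v}) R a b := by
    intro a b hab
    simp only [Delete, mem_union, mem_singleton] at hab ⊢
    tauto
  have hFVS : IsFVS E (R ∪ {v}) := acyclic_mono' hkeyrel hR.1.1
  have hpR : p ∉ R ∪ {v} := by
    simp only [mem_union, mem_singleton]
    push_neg
    exact ⟨hR.1.2, hpv⟩
  refine ⟨⟨hFVS, hpR⟩, ?_⟩
  -- Part 2: approximation
  intro S' hS'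
  have hS'fvs : IsFVS E S' := hS'.1.1
  have hS'p : p ∉ S' := hS'.1.2
  -- optimum for the reduced instance
  obtain ⟨S0, hS0⟩ := exists_opt_pdisj (Delete E {v}) w' p
    (fun x hx => hT.1 x hx.2.2)
  have hRle : weight w' R ≤ 2 * weight w' S0 := hR.2 S0 hS0
  -- S' \ {v} is a candidate for the reduced instance
  have hcand : IsPDisjFVS (Delete E {v}) p (S' \ {v}) := by
    constructor
    · apply acyclic_mono' (E := Delete E S') _ hS'fvs
      rintro a b ⟨ha, hb, hav, hbv, hab⟩
      simp only [mem_sdiff, mem_singleton, not_and, not_not] at ha hb hav hbv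
      refine ⟨fun h => hav (ha h), fun h => hbv (hb h), hab⟩
    · simp [hS'p]
  have hS0le : weight w' S0 ≤ weight w' (S' \ {v}) := hS0.2 _ hcand
  -- key : weight w' (S' \ {v}) + w v ≤ weight w S'
  have hkey : weight w' (S' \ {v}) + w v ≤ weight w S' := by
    by_cases hvS : v ∈ S'
    · have h1 : weight w' (S' \ {v}) ≤ weight w (S' \ {v}) :=
        Finset.sum_le_sum (fun x _ => hle x)
      have h2 : weight w (S' \ {v}) + w v = weight w S' := by
        rw [sdiff_singleton_eq_erase]
        exact Finset.sum_erase_add S' w hvS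
      omega
    · have hsd : S' \ {v} = S' := by
        rw [sdiff_singleton_eq_erase, Finset.erase_eq_of_notMem hvS]
      have hu : u ∈ S' := triangle_hit htri hS'fvs hS'p hvS
      have e1 : weight w' (S'.erase u) = weight w (S'.erase u) := by
        apply Finset.sum_congr rfl
        intro x hx
        exact hw'x x (Finset.ne_of_mem_erase hx)
          (fun h => hvS (h ▸ Finset.mem_of_mem_erase hx))
      have e2 : weight w' (S'.erase u) + w' u = weight w' S' :=
        Finset.sum_erase_add S' w' hu
      have e3 : weight w (S'.erase u) + w u = weight w S' :=
        Finset.sum_erase_add S' w hu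
      rw [hsd]
      rw [hw'u] at e2
      omega
  -- weight w R ≤ weight w' R + w v
  have hwR : weight w R ≤ weight w' R + w v := by
    have hpt : ∀ x ∈ R, w x ≤ w' x + (if x = u then w v else 0) := by
      intro x hx
      by_cases h1 : x = u
      · subst h1; simp [hw'u]; omega
      · have h2 : x ≠ v := fun e => hvR (e ▸ hx)
        simp [h1, hw'x x h1 h2]
    calc weight w R ≤ ∑ x ∈ R, (w' x + if x = u then w v else 0) :=
          Finset.sum_le_sum hpt
      _ = weight w' R + ∑ x ∈ R, (if x = u then w v else 0) := by
          rw [Finset.sum_add_distrib]; rfl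
      _ ≤ weight w' R + w v := by
          rw [Finset.sum_ite_eq' R u]
          split <;> omega
  -- weight of R ∪ {v}
  have hWtot : weight w (R ∪ {v}) = weight w R + w v := by
    have : R ∪ {v} = insert v R := by ext x; simp [or_comm]
    rw [this]
    unfold weight
    rw [Finset.sum_insert hvR]
    omega
  omega
end

section
/- Let G be a tournament, p a vertex not contained in any directed triangle of G, and let R⁻ and R⁺ be minimum-weight FVSs of G[N⁻(p)] and G[N⁺(p)] respectively (with respect to a weight function w). Then R⁻ ∪ R⁺ is a minimum-weight p-disjoint FVS of G. -/
open Finset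

variable {V : Type*}

/-- If `p` lies in no directed triangle and `R⁻`, `R⁺` are minimum-weight FVSs of
`G[N⁻(p)]` and `G[N⁺(p)]`, then `R⁻ ∪ R⁺` is a minimum-weight `p`-disjoint FVS of `G`. -/
theorem stmt9 [Fintype V] [DecidableEq V] (E : V → V → Prop) [DecidableRel E]
    (hT : IsTournament E) (w : V → ℕ) (p : V)
    (hp : ¬ ∃ a b, E p a ∧ E a b ∧ E b p)
    (Rm Rp : Finset V) (hRm : Rm ⊆ Nin E p) (hRp : Rp ⊆ Nout E p)
    (hoptm : IsOptFVS (Induce E (Nin E p)) w Rm)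
    (hoptp : IsOptFVS (Induce E (Nout E p)) w Rp) :
    IsOptPDisjFVS E w p (Rm ∪ Rp) := by
  obtain ⟨hirr, hone⟩ := hT
  have memNin : ∀ v, v ∈ Nin E p ↔ E v p := fun v => by simp [Nin]
  have memNout : ∀ v, v ∈ Nout E p ↔ E p v := fun v => by simp [Nout]
  have hA : ∀ a b, E a b → E b p → E a p := by
    intro a b hab hbp
    by_contra hnap
    have hbne : b ≠ p := fun h => hirr p (h ▸ hbp)
    have hane : a ≠ p := by
      intro h
      rw [h] at hab
      exact ((hone b p hbne).mp hbp) hab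
    have hpa : E p a := (hone p a (Ne.symm hane)).mpr hnap
    exact hp ⟨a, b, hpa, hab, hbp⟩
  have hB : ∀ a b, E a b → E p a → E p b := by
    intro a b hab hpa
    by_contra hnpb
    have hane : a ≠ p := fun h => hirr p (h ▸ hpa)
    have hbne : b ≠ p := by
      intro h
      rw [h] at hab
      exact ((hone p a (Ne.symm hane)).mp hpa) hab
    have hbp : E b p := by
      by_contra hnbp
      exact hnpb ((hone p b (Ne.symm hbne)).mpr hnbp)
    exact hp ⟨a, b, hpa, hab, hbp⟩
  have back : ∀ a b, Relation.TransGen (Delete E (Rm ∪ Rp)) a b → E b p →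
      E a p ∧ Relation.TransGen (Delete (Induce E (Nin E p)) Rm) a b := by
    intro a b h
    induction h with
    | single h =>
      intro hbp
      obtain ⟨haS, hbS, hab⟩ := h
      have hap := hA _ _ hab hbp
      exact ⟨hap, Relation.TransGen.single ⟨fun hm => haS (Finset.mem_union_left _ hm),
        fun hm => hbS (Finset.mem_union_left _ hm),
        (memNin _).mpr hap, (memNin _).mpr hbp, hab⟩⟩
    | tail h1 h2 ih =>
      intro hcp
      obtain ⟨hbS, hcS, hbc⟩ := h2
      have hbp := hA _ _ hbc hcp
      obtain ⟨hap, ht⟩ := ih hbp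
      exact ⟨hap, ht.tail ⟨fun hm => hbS (Finset.mem_union_left _ hm),
        fun hm => hcS (Finset.mem_union_left _ hm),
        (memNin _).mpr hbp, (memNin _).mpr hcp, hbc⟩⟩
  have forward : ∀ a b, Relation.TransGen (Delete E (Rm ∪ Rp)) a b → E p a →
      E p b ∧ Relation.TransGen (Delete (Induce E (Nout E p)) Rp) a b := by
    intro a b h
    induction h with
    | single h =>
      intro hpa
      obtain ⟨haS, hbS, hab⟩ := h
      have hpb := hB _ _ hab hpa
      exact ⟨hpb, Relation.TransGen.single ⟨fun hm => haS (Finset.mem_union_right _ hm),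
        fun hm => hbS (Finset.mem_union_right _ hm),
        (memNout _).mpr hpa, (memNout _).mpr hpb, hab⟩⟩
    | tail h1 h2 ih =>
      intro hpa
      obtain ⟨hbS, hcS, hbc⟩ := h2
      obtain ⟨hpb, ht⟩ := ih hpa
      have hpc := hB _ _ hbc hpb
      exact ⟨hpc, ht.tail ⟨fun hm => hbS (Finset.mem_union_right _ hm),
        fun hm => hcS (Finset.mem_union_right _ hm),
        (memNout _).mpr hpb, (memNout _).mpr hpc, hbc⟩⟩
  have hpS : p ∉ Rm ∪ Rp := by
    intro h
    rcases Finset.mem_union.mp h with h | h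
    · exact hirr p ((memNin p).mp (hRm h))
    · exact hirr p ((memNout p).mp (hRp h))
  have hfvs : IsFVS E (Rm ∪ Rp) := by
    intro v hv
    by_cases hvp : v = p
    · rw [hvp] at hv
      obtain ⟨c, hpc, ht⟩ := Relation.TransGen.head'_iff.mp hv
      rcases Relation.reflTransGen_iff_eq_or_transGen.mp ht with h | h
      · rw [← h] at hpc; exact hirr p hpc.2.2
      · exact hirr p (forward c p h hpc.2.2).1
    · by_cases hvpE : E v p
      · exact hoptm.1 v (back v v hv hvpE).2
      · have hpv : E p v := (hone p v (Ne.symm hvp)).mpr hvpE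
        exact hoptp.1 v (forward v v hv hpv).2
  refine ⟨⟨hfvs, hpS⟩, ?_⟩
  rintro S' ⟨hS'fvs, hpS'⟩
  have hmfvs : IsFVS (Induce E (Nin E p)) (S' ∩ Nin E p) := by
    intro v hv
    refine hS'fvs v (Relation.TransGen.mono ?_ v v hv)
    rintro a b ⟨haX, hbX, haN, hbN, hab⟩
    exact ⟨fun h => haX (Finset.mem_inter.mpr ⟨h, haN⟩),
           fun h => hbX (Finset.mem_inter.mpr ⟨h, hbN⟩), hab⟩
  have hpfvs : IsFVS (Induce E (Nout E p)) (S' ∩ Nout E p) := by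
    intro v hv
    refine hS'fvs v (Relation.TransGen.mono ?_ v v hv)
    rintro a b ⟨haX, hbX, haN, hbN, hab⟩
    exact ⟨fun h => haX (Finset.mem_inter.mpr ⟨h, haN⟩),
           fun h => hbX (Finset.mem_inter.mpr ⟨h, hbN⟩), hab⟩
  have h1 : weight w Rm ≤ weight w (S' ∩ Nin E p) := hoptm.2 _ hmfvs
  have h2 : weight w Rp ≤ weight w (S' ∩ Nout E p) := hoptp.2 _ hpfvs
  have hdisj : Disjoint Rm Rp := by
    rw [Finset.disjoint_left]
    intro v hvm hvp
    have hv1 := (memNin v).mp (hRm hvm)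
    have hv2 := (memNout v).mp (hRp hvp)
    have hne : v ≠ p := fun h => hirr p (h ▸ hv1)
    exact ((hone v p hne).mp hv1) hv2
  have hdisj2 : Disjoint (S' ∩ Nin E p) (S' ∩ Nout E p) := by
    rw [Finset.disjoint_left]
    intro v hv1 hv2
    have ha := (memNin v).mp (Finset.mem_inter.mp hv1).2
    have hb := (memNout v).mp (Finset.mem_inter.mp hv2).2
    have hne : v ≠ p := fun h => hirr p (h ▸ ha)
    exact ((hone v p hne).mp ha) hb
  have key : weight w (S' ∩ Nin E p) + weight w (S' ∩ Nout E p) ≤ weight w S' := by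
    unfold weight
    rw [← Finset.sum_union hdisj2]
    apply Finset.sum_le_sum_of_subset
    intro v hv
    rcases Finset.mem_union.mp hv with h | h
    · exact (Finset.mem_inter.mp h).1
    · exact (Finset.mem_inter.mp h).1
  calc weight w (Rm ∪ Rp) = weight w Rm + weight w Rp := Finset.sum_union hdisj
    _ ≤ weight w (S' ∩ Nin E p) + weight w (S' ∩ Nout E p) := Nat.add_le_add h1 h2
    _ ≤ weight w S' := key
end

section
/- Let G be a tournament on n vertices and S an FVS of G with |S| < 2n/3. Then there exist at least ⌈n/9⌉ vertices v ∉ S such that both |N⁺(v)| ≤ 8n/9 and |N⁻(v)| ≤ 8n/9. -/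
open Finset

variable {V : Type*}

/-- If `S` is an FVS of a tournament on `n` vertices with `|S| < 2n/3`, then there
are at least `⌈n/9⌉` vertices `v ∉ S` with both in- and out-degree at most `8n/9`. -/
theorem stmt11 [Fintype V] [DecidableEq V] (E : V → V → Prop) [DecidableRel E]
    (hT : IsTournament E) (S : Finset V) (hS : IsFVS E S)
    (hsmall : 3 * S.card < 2 * Fintype.card V) :
    (Fintype.card V + 8) / 9 ≤
      ((Finset.univ \ S).filter (fun v =>
        9 * (Nout E v).card ≤ 8 * Fintype.card V ∧
          9 * (Nin E v).card ≤ 8 * Fintype.card V)).card := by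
  classical
  set n := Fintype.card V with hn
  by_cases hn0 : n = 0
  · have : (n + 8) / 9 = 0 := by omega
    rw [this]; exact Nat.zero_le _
  set A : Finset V := Finset.univ \ S with hA
  set s := S.card with hs
  have hAcard : A.card + s = n := by
    rw [hA, hs, card_sdiff_of_subset (subset_univ S), hn, ← card_univ]
    exact Nat.sub_add_cancel (card_le_card (subset_univ S))
  set m := A.card with hm
  set d : V → ℕ := fun v => (A.filter (fun u => E u v)).card with hd
  have hmemA : ∀ v, v ∈ A ↔ v ∉ S := by intro v; simp [hA]
  -- monotonicity of d along edges
  have hmono : ∀ u ∈ A, ∀ v ∈ A, E u v → d u < d v := by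
    intro u hu v hv huv
    have hne : u ≠ v := by rintro rfl; exact hT.1 u huv
    have hsub : A.filter (fun w => E w u) ⊆ A.filter (fun w => E w v) := by
      intro w hw
      rw [mem_filter] at hw ⊢
      obtain ⟨hwA, hwu⟩ := hw
      refine ⟨hwA, ?_⟩
      by_cases hwv : w = v
      · subst hwv
        exact absurd hwu ((hT.2 u w hne).mp huv)
      · by_contra hnwv
        have hvw : E v w := by
          have := hT.2 v w (Ne.symm hwv)
          tauto
        exact hS v (Relation.TransGen.head
          ⟨(hmemA v).mp hv, (hmemA w).mp hwA, hvw⟩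
          (Relation.TransGen.head
            ⟨(hmemA w).mp hwA, (hmemA u).mp hu, hwu⟩
            (Relation.TransGen.single
              ⟨(hmemA u).mp hu, (hmemA v).mp hv, huv⟩)))
    have hss : A.filter (fun w => E w u) ⊂ A.filter (fun w => E w v) := by
      refine ⟨hsub, fun hcon => ?_⟩
      have hu' : u ∈ A.filter (fun w => E w v) := mem_filter.mpr ⟨hu, huv⟩
      have := mem_filter.mp (hcon hu')
      exact hT.1 u this.2
    exact card_lt_card hss
  have hinj : Set.InjOn d A := by
    intro u hu v hv h
    by_contra hne
    by_cases huv : E u v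
    · exact absurd h (Nat.ne_of_lt (hmono u hu v hv huv))
    · have hvu : E v u := by have := hT.2 u v hne; tauto
      exact absurd h.symm (Nat.ne_of_lt (hmono v hv u hu hvu))
  have hdm : ∀ v ∈ A, d v < m := by
    intro v hv
    have hsub : A.filter (fun u => E u v) ⊆ A.erase v := by
      intro w hw
      rw [mem_filter] at hw
      refine mem_erase.mpr ⟨?_, hw.1⟩
      rintro rfl; exact hT.1 _ hw.2
    have h1 := card_le_card hsub
    rw [card_erase_of_mem hv] at h1
    have hm1 : 1 ≤ m := card_pos.mpr ⟨v, hv⟩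
    have hdv : d v = (A.filter (fun u => E u v)).card := rfl
    omega
  have himg : A.image d = range m := by
    apply Finset.eq_of_subset_of_card_le
    · intro i hi
      obtain ⟨v, hv, rfl⟩ := mem_image.mp hi
      exact mem_range.mpr (hdm v hv)
    · rw [card_range, card_image_of_injOn hinj]
  -- degree bounds
  have hNin : ∀ v ∈ A, (Nin E v).card ≤ s + d v := by
    intro v hv
    have hsub : Nin E v ⊆ S ∪ A.filter (fun u => E u v) := by
      intro u hu
      rw [Nin, mem_filter] at hu
      rw [mem_union, mem_filter]
      by_cases huS : u ∈ S
      · exact Or.inl huS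
      · exact Or.inr ⟨(hmemA u).mpr huS, hu.2⟩
    calc (Nin E v).card ≤ (S ∪ A.filter (fun u => E u v)).card := card_le_card hsub
      _ ≤ s + d v := card_union_le _ _
  have hNout : ∀ v ∈ A, (Nout E v).card + d v + 1 ≤ s + m := by
    intro v hv
    have hsub : Nout E v ⊆ S ∪ A.filter (fun u => E v u) := by
      intro u hu
      rw [Nout, mem_filter] at hu
      rw [mem_union, mem_filter]
      by_cases huS : u ∈ S
      · exact Or.inl huS
      · exact Or.inr ⟨(hmemA u).mpr huS, hu.2⟩
    have h1 : (Nout E v).card ≤ s + (A.filter (fun u => E v u)).card :=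
      le_trans (card_le_card hsub) (card_union_le _ _)
    -- filter split
    have h2 : (A.filter (fun u => E v u)).card + (A.filter (fun u => ¬ E v u)).card = m :=
      card_filter_add_card_filter_not _
    have h3 : A.filter (fun u => ¬ E v u) = insert v (A.filter (fun u => E u v)) := by
      ext u
      rw [mem_filter, mem_insert, mem_filter]
      constructor
      · rintro ⟨huA, hnvu⟩
        by_cases huv : u = v
        · exact Or.inl huv
        · exact Or.inr ⟨huA, by have := hT.2 v u (Ne.symm huv); tauto⟩
      · rintro (rfl | ⟨huA, huv⟩)
        · exact ⟨hv, hT.1 _⟩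
        · refine ⟨huA, fun hvu => ?_⟩
          have hne : u ≠ v := by rintro rfl; exact hT.1 u huv
          exact absurd hvu ((hT.2 u v hne).mp huv)
    have hvnot : v ∉ A.filter (fun u => E u v) := by
      rw [mem_filter]; rintro ⟨_, h⟩; exact hT.1 v h
    rw [h3, card_insert_of_notMem hvnot] at h2
    have hdv : d v = (A.filter (fun u => E u v)).card := rfl
    omega
  -- the good-position count
  set q : ℕ → Prop := fun i => n ≤ 9 * i + 9 ∧ 9 * i + n ≤ 9 * m with hq
  have hFpos : ((range m).filter q).card = (A.filter (fun v => q (d v))).card := by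
    rw [← himg, filter_image, card_image_of_injOn (hinj.mono (filter_subset _ _))]
  have hFsub : A.filter (fun v => q (d v)) ⊆
      ((Finset.univ \ S).filter (fun v =>
        9 * (Nout E v).card ≤ 8 * n ∧ 9 * (Nin E v).card ≤ 8 * n)) := by
    intro v hv
    rw [mem_filter] at hv
    obtain ⟨hvA, hq1, hq2⟩ := hv
    rw [mem_filter]
    refine ⟨by rwa [← hA], ?_, ?_⟩
    · have h1 := hNout v hvA
      omega
    · have h1 := hNin v hvA
      omega
  have hlow : (n + 8) / 9 ≤ ((range m).filter q).card := by
    set lo := (n - 1) / 9 with hlo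
    set k := (n + 8) / 9 with hk
    have hmaps : ∀ j ∈ range k, lo + j ∈ (range m).filter q := by
      intro j hj
      rw [mem_range] at hj
      simp only [mem_filter, mem_range, hq]
      omega
    calc k = (range k).card := (card_range k).symm
      _ ≤ ((range m).filter q).card :=
        card_le_card_of_injOn (fun j => lo + j) hmaps (by intro a _ b _ h; simpa using h)
  calc (n + 8) / 9 ≤ ((range m).filter q).card := hlow
    _ = (A.filter (fun v => q (d v))).card := hFpos
    _ ≤ _ := card_le_card hFsub
end

section
/- Let (G, w) be a weighted tournament and p a vertex not in any triangle of G. If S⁻ is a 2-approximate solution of (G[N⁻(p)], w) and S⁺ is a 2-approximate solution of (G[N⁺(p)], w), then S⁻ ∪ S⁺ is a 2-approximate p-disjoint solution of (G, w). -/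
open Finset

variable {V : Type*}

lemma transGen_f_le {E' : V → V → Prop} {f : V → ℕ}
    (hmono : ∀ a b, E' a b → f a ≤ f b) :
    ∀ a b, Relation.TransGen E' a b → f a ≤ f b := by
  intro a b h
  induction h with
  | single h => exact hmono _ _ h
  | tail _ h ih => exact le_trans ih (hmono _ _ h)

lemma transGen_level {E' : V → V → Prop} {f : V → ℕ}
    (hmono : ∀ a b, E' a b → f a ≤ f b) {a b : V}
    (h : Relation.TransGen E' a b) (hba : f b ≤ f a) :
    Relation.TransGen (fun x y => E' x y ∧ f x = f a ∧ f y = f a) a b := by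
  induction h with
  | single h =>
      exact Relation.TransGen.single ⟨h, rfl, le_antisymm hba (hmono _ _ h)⟩
  | @tail c b h₁ h₂ ih =>
      have hac : f a ≤ f c := transGen_f_le hmono _ _ h₁
      have hcb : f c ≤ f b := hmono _ _ h₂
      have hca : f c = f a := le_antisymm (le_trans hcb hba) hac
      have hbafb : f b = f a := le_antisymm hba (le_trans hac hcb)
      exact Relation.TransGen.tail (ih (hca.le)) ⟨h₂, hca, hbafb⟩

lemma exists_opt_fvs [Fintype V] [DecidableEq V] (E : V → V → Prop) (w : V → ℕ) :
    ∃ S, IsOptFVS E w S := by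
  classical
  have huniv : IsFVS E (Finset.univ : Finset V) := by
    intro v hv
    cases hv with
    | single h => exact h.1 (Finset.mem_univ _)
    | tail _ h => exact h.1 (Finset.mem_univ _)
  obtain ⟨S, hSmem, hSmin⟩ :=
    Finset.exists_min_image (Finset.univ.filter (fun S => IsFVS E S)) (weight w)
      ⟨Finset.univ, by simp [huniv]⟩
  refine ⟨S, (Finset.mem_filter.mp hSmem).2, fun S' hS' => ?_⟩
  exact hSmin S' (by simp [hS'])

/-- If `p` lies in no directed triangle and `S⁻`, `S⁺` are 2-approximate solutions
of `(G[N⁻(p)], w)` and `(G[N⁺(p)], w)`, then `S⁻ ∪ S⁺` is a 2-approximate `p`-disjoint solution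
of `(G, w)`. -/
theorem stmt13 [Fintype V] [DecidableEq V] (E : V → V → Prop) [DecidableRel E]
    (hT : IsTournament E) (w : V → ℕ) (p : V)
    (hp : ¬ ∃ a b, E p a ∧ E a b ∧ E b p)
    (Sm Sp : Finset V) (hSm : Sm ⊆ Nin E p) (hSp : Sp ⊆ Nout E p)
    (h2m : TwoApproxFVS (Induce E (Nin E p)) w Sm)
    (h2p : TwoApproxFVS (Induce E (Nout E p)) w Sp) :
    TwoApproxPDisj E w p (Sm ∪ Sp) := by
  classical
  have hloop := hT.1
  have hmemNin : ∀ v, v ∈ Nin E p ↔ E v p := by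
    intro v; simp [Nin]
  have hmemNout : ∀ v, v ∈ Nout E p ↔ E p v := by
    intro v; simp [Nout]
  have hpNin : p ∉ Nin E p := fun h => hloop p ((hmemNin p).mp h)
  have hpNout : p ∉ Nout E p := fun h => hloop p ((hmemNout p).mp h)
  set f : V → ℕ := fun v => if v ∈ Nin E p then 0 else if v = p then 1 else 2 with hf
  have hfNin : ∀ v, v ∈ Nin E p → f v = 0 := by intro v hv; simp [hf, hv]
  have hfp : f p = 1 := by simp [hf, hpNin]
  have hfNout : ∀ v, v ∉ Nin E p → v ≠ p → f v = 2 := by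
    intro v h1 h2; simp [hf, h1, h2]
  have hf0 : ∀ v, f v = 0 → v ∈ Nin E p := by
    intro v hv; by_contra h
    by_cases h2 : v = p
    · rw [h2, hfp] at hv; omega
    · rw [hfNout v h h2] at hv; omega
  have hf1 : ∀ v, f v = 1 → v = p := by
    intro v hv; by_contra h2
    by_cases h : v ∈ Nin E p
    · rw [hfNin v h] at hv; omega
    · rw [hfNout v h h2] at hv; omega
  have hf2 : ∀ v, f v = 2 → v ∈ Nout E p := by
    intro v hv
    have h1 : v ∉ Nin E p := by
      intro h; rw [hfNin v h] at hv; omega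
    have h2 : v ≠ p := by
      intro h; rw [h, hfp] at hv; omega
    rw [hmemNout]
    rw [hmemNin] at h1
    exact ((hT.2 p v (Ne.symm h2)).mpr h1)
  -- monotonicity of f along arcs of E
  have hmono : ∀ a b, E a b → f a ≤ f b := by
    intro a b hab
    by_cases haN : a ∈ Nin E p
    · rw [hfNin a haN]; omega
    by_cases hap : a = p
    · have hab' : E p b := hap ▸ hab
      have hbp : b ≠ p := fun h => hloop p (h ▸ hab')
      have hbN : b ∉ Nin E p := by
        rw [hmemNin]
        exact (hT.2 p b (Ne.symm hbp)).mp hab'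
      rw [hap, hfp, hfNout b hbN hbp]; omega
    · -- a ∈ Nout
      have hnap : ¬ E a p := by rwa [hmemNin] at haN
      have hpa : E p a := (hT.2 p a (Ne.symm hap)).mpr hnap
      have hbp : b ≠ p := fun h => hnap (h ▸ hab)
      have hbN : b ∉ Nin E p := by
        rw [hmemNin]
        intro hbpE
        exact hp ⟨a, b, hpa, hab, hbpE⟩
      rw [hfNout a haN hap, hfNout b hbN hbp]
  have hmonoD : ∀ (X : Finset V) a b, Delete E X a b → f a ≤ f b :=
    fun X a b h => hmono a b h.2.2
  -- S' ∩ Nin is FVS of induced in-graph, etc., generalized helper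
  have hFVSm : IsFVS E (Sm ∪ Sp) := by
    intro v hv
    have hlev := transGen_level (hmonoD (Sm ∪ Sp)) hv le_rfl
    rcases Nat.lt_or_ge (f v) 1 with h0 | h1
    · have hfv : f v = 0 := by omega
      have : Relation.TransGen (Delete (Induce E (Nin E p)) Sm) v v := by
        refine Relation.TransGen.mono ?_ _ _ hlev
        rintro x y ⟨⟨hx, hy, hE⟩, hfx, hfy⟩
        rw [hfv] at hfx hfy
        exact ⟨fun h => hx (Finset.mem_union_left _ h),
               fun h => hy (Finset.mem_union_left _ h),
               hf0 x hfx, hf0 y hfy, hE⟩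
      exact h2m.1 v this
    rcases Nat.lt_or_ge (f v) 2 with h2 | h2
    · have hfv : f v = 1 := by omega
      have hvp : v = p := hf1 v hfv
      cases hlev with
      | single h =>
          exact hloop v h.1.2.2
      | tail h1 h =>
          rename_i c
          have hc : c = p := hf1 c (h.2.1.trans hfv)
          have hE : E c v := h.1.2.2
          rw [hc, hvp] at hE
          exact hloop p hE
    · have hfv : f v = 2 := by
        have := hmonoD (Sm ∪ Sp)
        -- f ≤ 2 always
        have hle : f v ≤ 2 := by
          by_cases h : v ∈ Nin E p
          · rw [hfNin v h]; omega
          by_cases h' : v = p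
          · rw [h', hfp]; omega
          · rw [hfNout v h h']
        omega
      have : Relation.TransGen (Delete (Induce E (Nout E p)) Sp) v v := by
        refine Relation.TransGen.mono ?_ _ _ hlev
        rintro x y ⟨⟨hx, hy, hE⟩, hfx, hfy⟩
        rw [hfv] at hfx hfy
        exact ⟨fun h => hx (Finset.mem_union_right _ h),
               fun h => hy (Finset.mem_union_right _ h),
               hf2 x hfx, hf2 y hfy, hE⟩
      exact h2p.1 v this
  have hpSmSp : p ∉ Sm ∪ Sp := by
    intro h
    rcases Finset.mem_union.mp h with h | h
    · exact hpNin (hSm h)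
    · exact hpNout (hSp h)
  refine ⟨⟨hFVSm, hpSmSp⟩, ?_⟩
  rintro S' ⟨⟨hS'FVS, hS'p⟩, -⟩
  -- S' ∩ Nin is FVS of induced in-graph
  have hAm : IsFVS (Induce E (Nin E p)) (S' ∩ Nin E p) := by
    intro v hv
    refine hS'FVS v (Relation.TransGen.mono ?_ _ _ hv)
    rintro x y ⟨hx, hy, hxN, hyN, hE⟩
    exact ⟨fun h => hx (Finset.mem_inter.mpr ⟨h, hxN⟩),
           fun h => hy (Finset.mem_inter.mpr ⟨h, hyN⟩), hE⟩
  have hAp : IsFVS (Induce E (Nout E p)) (S' ∩ Nout E p) := by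
    intro v hv
    refine hS'FVS v (Relation.TransGen.mono ?_ _ _ hv)
    rintro x y ⟨hx, hy, hxN, hyN, hE⟩
    exact ⟨fun h => hx (Finset.mem_inter.mpr ⟨h, hxN⟩),
           fun h => hy (Finset.mem_inter.mpr ⟨h, hyN⟩), hE⟩
  obtain ⟨Om, hOm⟩ := exists_opt_fvs (Induce E (Nin E p)) w
  obtain ⟨Op, hOp⟩ := exists_opt_fvs (Induce E (Nout E p)) w
  have h1 : weight w Sm ≤ 2 * weight w Om := h2m.2 Om hOm
  have h2 : weight w Sp ≤ 2 * weight w Op := h2p.2 Op hOp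
  have h3 : weight w Om ≤ weight w (S' ∩ Nin E p) := hOm.2 _ hAm
  have h4 : weight w Op ≤ weight w (S' ∩ Nout E p) := hOp.2 _ hAp
  have hdisj : Disjoint (S' ∩ Nin E p) (S' ∩ Nout E p) := by
    rw [Finset.disjoint_left]
    intro a ha ha'
    have h1 := (hmemNin a).mp (Finset.mem_inter.mp ha).2
    have h2 := (hmemNout a).mp (Finset.mem_inter.mp ha').2
    have hap : a ≠ p := fun h => hloop p (h ▸ h1)
    exact (hT.2 p a (Ne.symm hap)).mp h2 h1
  have h5 : weight w (S' ∩ Nin E p) + weight w (S' ∩ Nout E p) ≤ weight w S' := by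
    rw [weight, weight, weight, ← Finset.sum_union hdisj]
    exact Finset.sum_le_sum_of_subset (by
      intro a ha
      rcases Finset.mem_union.mp ha with h | h
      · exact (Finset.mem_inter.mp h).1
      · exact (Finset.mem_inter.mp h).1)
  have h6 : weight w (Sm ∪ Sp) ≤ weight w Sm + weight w Sp := by
    rw [weight, weight, weight, ← Finset.sum_union_inter]
    exact Nat.le_add_right _ _
  omega
end

section
/- Let G be a tournament, p a vertex, and suppose there is no arc from N⁺(p) to N⁻(p). Then any union of an FVS of G[N⁻(p)] and an FVS of G[N⁺(p)] is a p-disjoint FVS of G. -/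
open Finset

variable {V : Type*}

/-- If there is no arc from `N⁺(p)` to `N⁻(p)`, then the union of an FVS of
`G[N⁻(p)]` and an FVS of `G[N⁺(p)]` is a `p`-disjoint FVS of `G`. -/
theorem stmt17 [Fintype V] [DecidableEq V] (E : V → V → Prop) [DecidableRel E]
    (hT : IsTournament E) (p : V)
    (hno : ∀ x y, E p x → E y p → ¬ E x y)
    (Sm Sp : Finset V) (hSm : Sm ⊆ Nin E p) (hSp : Sp ⊆ Nout E p)
    (hm : IsFVS (Induce E (Nin E p)) Sm) (hp2 : IsFVS (Induce E (Nout E p)) Sp) :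
    IsPDisjFVS E p (Sm ∪ Sp) := by
  classical
  set S := Sm ∪ Sp with hS
  have hpNin : p ∉ Nin E p := by simp [Nin, hT.1 p]
  have hpNout : p ∉ Nout E p := by simp [Nout, hT.1 p]
  have hpS : p ∉ S := by
    simp only [hS, Finset.mem_union]
    rintro (h | h)
    · exact hpNin (hSm h)
    · exact hpNout (hSp h)
  set f : V → ℕ := fun v => if v ∈ Nin E p then 0 else if v ∈ Nout E p then 2 else 1 with hf
  have hcover : ∀ v, v ≠ p → v ∈ Nin E p ∨ v ∈ Nout E p := by
    intro v hv
    by_cases h : E p v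
    · right; simp [Nout, h]
    · left; simp [Nin, (hT.2 v p hv).mpr h]
  have hmono : ∀ a b, Delete E S a b → f a ≤ f b := by
    rintro a b ⟨haS, hbS, hab⟩
    have hne : a ≠ b := by rintro rfl; exact hT.1 a hab
    by_cases ha : a ∈ Nin E p
    · simp [hf, ha]
    · by_cases hb : b ∈ Nin E p
      · exfalso
        have hbp : E b p := by simpa [Nin] using hb
        by_cases hap : a = p
        · exact (hT.2 p b (hap ▸ hne)).mp (hap ▸ hab) hbp
        · rcases hcover a hap with h | h
          · exact ha h
          · have hpa : E p a := by simpa [Nout] using h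
            exact hno a b hpa hbp hab
      · by_cases hb2 : b ∈ Nout E p
        · simp only [hf, if_neg ha, if_neg hb, if_pos hb2]; split_ifs <;> omega
        · exfalso
          have hbp : b = p := by
            by_contra hbp
            rcases hcover b hbp with h | h
            · exact hb h
            · exact hb2 h
          have : a ∈ Nin E p := by simp [Nin, hbp ▸ hab]
          exact ha this
  have hmonoT : ∀ a b, Relation.TransGen (Delete E S) a b → f a ≤ f b := by
    intro a b h
    induction h with
    | single h => exact hmono _ _ h
    | tail _ h ih => exact le_trans ih (hmono _ _ h)
  have hlevel : ∀ x y, Relation.TransGen (Delete E S) x y → f y ≤ f x →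
      Relation.TransGen (fun a b => Delete E S a b ∧ f a = f x ∧ f b = f x) x y := by
    intro x y h
    induction h with
    | single h =>
      intro hle
      exact Relation.TransGen.single ⟨h, rfl, le_antisymm hle (hmono _ _ h)⟩
    | tail hxy h ih =>
      rename_i b c
      intro hle
      have h1 : f x ≤ f b := hmonoT _ _ hxy
      have h2 : f b ≤ f c := hmono _ _ h
      have hbx : f b = f x := le_antisymm (le_trans h2 hle) h1
      have hcx : f c = f x := le_antisymm hle (le_trans h1 h2)
      exact Relation.TransGen.tail (ih hbx.le) ⟨h, hbx, hcx⟩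
  refine ⟨?_, hpS⟩
  intro v hv
  have hres := hlevel v v hv le_rfl
  by_cases hvin : v ∈ Nin E p
  · have hfv : f v = 0 := by simp [hf, hvin]
    have : Relation.TransGen (Delete (Induce E (Nin E p)) Sm) v v := by
      refine Relation.TransGen.mono ?_ _ _ hres
      rintro a b ⟨⟨haS, hbS, hab⟩, hfa, hfb⟩
      have ha : a ∈ Nin E p := by
        by_contra h; rw [hfv] at hfa; simp only [hf, if_neg h] at hfa; split_ifs at hfa <;> omega
      have hb : b ∈ Nin E p := by
        by_contra h; rw [hfv] at hfb; simp only [hf, if_neg h] at hfb; split_ifs at hfb <;> omega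
      exact ⟨fun h => haS (Finset.mem_union_left _ h),
             fun h => hbS (Finset.mem_union_left _ h), ha, hb, hab⟩
    exact hm v this
  · by_cases hvout : v ∈ Nout E p
    · have hfv : f v = 2 := by simp [hf, hvin, hvout]
      have : Relation.TransGen (Delete (Induce E (Nout E p)) Sp) v v := by
        refine Relation.TransGen.mono ?_ _ _ hres
        rintro a b ⟨⟨haS, hbS, hab⟩, hfa, hfb⟩
        have ha : a ∈ Nout E p := by
          by_contra h; rw [hfv] at hfa; simp only [hf] at hfa; split_ifs at hfa <;> omega
        have hb : b ∈ Nout E p := by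
          by_contra h; rw [hfv] at hfb; simp only [hf] at hfb; split_ifs at hfb <;> omega
        exact ⟨fun h => haS (Finset.mem_union_right _ h),
             fun h => hbS (Finset.mem_union_right _ h), ha, hb, hab⟩
      exact hp2 v this
    · have hvp : v = p := by
        by_contra h
        rcases hcover v h with h1 | h1
        · exact hvin h1
        · exact hvout h1
      have hfv : f v = 1 := by simp [hf, hvin, hvout]
      obtain ⟨c, ⟨⟨_, _, hpc⟩, _, hfc⟩, -⟩ := (Relation.TransGen.head'_iff.mp hres)
      by_cases hcveq : c = v
      · exact hT.1 v (hcveq ▸ hpc)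
      · have hc : c ∈ Nout E p := by simp [Nout, hvp ▸ hpc]
        have hfc2 : f c = 2 := by
          have hcin : c ∉ Nin E p := by
            simp only [Nin, Finset.mem_filter]
            rintro ⟨-, hcv'⟩
            have hcv : c ≠ p := fun h => hT.1 p (h ▸ hcv')
            exact (hT.2 p c hcv.symm).mp (hvp ▸ hpc) hcv'
          simp [hf, hcin, hc]
        rw [hfc, hfv] at hfc2
        omega
end
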